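/- Let G be a split graph with partition (C, I), let S be a set of vertices such that G − S is P4-free, and suppose u, v ∈ I are such that there exist a ∈ N(u) \ N(v) and b ∈ N(v) \ N(u). Then u ∈ S, or v ∈ S, or (N(u) \ N(v)) ⊆ S, or (N(v) \ N(u)) ⊆ S. -/

import Mathlib

variable {V : Type*}

/-- `a,b,c,d` (in this order) form an induced path on four vertices. -/
def InducedP4 (G : SimpleGraph V) (a b c d : V) : Prop :=
  a ≠ b ∧ a ≠ c ∧ a ≠ d ∧ b ≠ c ∧ b ≠ d ∧ c ≠ d ∧
  G.Adj a b ∧ G.Adj b c ∧ G.Adj c d ∧ ¬ G.Adj a c ∧ ¬ G.Adj a d ∧ ¬ G.Adj b d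

/-- A graph is `P4`-free if it has no induced path on four vertices. -/
def P4Free (G : SimpleGraph V) : Prop := ¬ ∃ a b c d : V, InducedP4 G a b c d

theorem stmt_6 (G : SimpleGraph V)
    (C I : Set V) (hunion : ∀ v, v ∈ C ∨ v ∈ I) (hdisj : Disjoint C I)
    (hC : G.IsClique C) (hI : ∀ u ∈ I, ∀ v ∈ I, ¬ G.Adj u v)
    (S : Set V) (hS : P4Free (G.induce Sᶜ))
    (u v : V) (hu : u ∈ I) (hv : v ∈ I)
    (ha : (G.neighborSet u \ G.neighborSet v).Nonempty)
    (hb : (G.neighborSet v \ G.neighborSet u).Nonempty) :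
    u ∈ S ∨ v ∈ S ∨ (G.neighborSet u \ G.neighborSet v) ⊆ S ∨
      (G.neighborSet v \ G.neighborSet u) ⊆ S := by
  by_contra hcon
  push_neg at hcon
  obtain ⟨huS, hvS, hAS, hBS⟩ := hcon
  rw [Set.not_subset] at hAS hBS
  obtain ⟨a, ⟨hau, hav⟩, haS⟩ := hAS
  obtain ⟨b, ⟨hbv, hbu⟩, hbS⟩ := hBS
  simp only [SimpleGraph.mem_neighborSet] at hau hav hbv hbu
  -- a and b are in C
  have haC : a ∈ C := by
    rcases hunion a with h | h
    · exact h
    · exact absurd hau.symm (hI a h u hu)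
  have hbC : b ∈ C := by
    rcases hunion b with h | h
    · exact h
    · exact absurd hbv.symm (hI b h v hv)
  have hab : a ≠ b := by rintro rfl; exact hbu hau
  have hadjab : G.Adj a b := hC haC hbC hab
  have huv : u ≠ v := by rintro rfl; exact hav hau
  have hnadjuv : ¬ G.Adj u v := hI u hu v hv
  have hub : u ≠ b := by rintro rfl; exact hnadjuv hbv.symm
  have hva : v ≠ a := by rintro rfl; exact hnadjuv hau
  have hbvne : b ≠ v := fun h => G.irrefl (h ▸ hbv)
  apply hS
  exact ⟨⟨u, huS⟩, ⟨a, haS⟩, ⟨b, hbS⟩, ⟨v, hvS⟩,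
    fun h => (G.ne_of_adj hau) (congrArg Subtype.val h),
    fun h => hub (congrArg Subtype.val h),
    fun h => huv (congrArg Subtype.val h),
    fun h => hab (congrArg Subtype.val h),
    fun h => (Ne.symm hva) (congrArg Subtype.val h),
    fun h => hbvne (congrArg Subtype.val h),
    hau, hadjab, hbv.symm, hbu, hnadjuv, fun h => hav h.symm⟩
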